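/- Let M ⊆ ℕ^n and for each i < n let A_i be the set of tuples x ∈ (ℕ ∪ {∞})^n with exactly i coordinates equal to ∞ such that x beats M (i.e., x is not coordinatewise ≥ any element of M) and no x' ≠ x obtained from x by replacing some finite coordinates by ∞ beats M. Then each A_i is finite. -/

import Mathlib

/-- `v` beats `S`: `v` is not coordinatewise above any element of `S`. -/
def Beats {n : ℕ} (v : Fin n → ℕ∞) (S : Set (Fin n → ℕ)) : Prop :=
  ∀ w ∈ S, ¬ (fun j => (w j : ℕ∞)) ≤ v

/-- The set `A_i(M)` of tuples with exactly `i` coordinates equal to ∞ that beat `M`,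
such that no tuple obtained by replacing some finite coordinates by ∞ still beats `M`. -/
def MinBeaters (n i : ℕ) (M : Set (Fin n → ℕ)) : Set (Fin n → ℕ∞) :=
  {x | (Finset.univ.filter fun j => x j = (⊤ : ℕ∞)).card = i ∧ Beats x M ∧
    ∀ y : Fin n → ℕ∞, y ≠ x → (∀ j, y j = x j ∨ y j = (⊤ : ℕ∞)) → ¬ Beats y M}

/-- If a natural number (coerced) is at most the supremum of a sequence in `ℕ∞`,
then it is at most some term of the sequence. -/
lemma exists_le_of_natCast_le_iSup (u : ℕ → ℕ∞) (w : ℕ) (h : (w : ℕ∞) ≤ ⨆ k, u k) :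
    ∃ k, (w : ℕ∞) ≤ u k := by
  cases w with
  | zero => exact ⟨0, by simp⟩
  | succ m =>
    have h1 : (m : ℕ∞) < ⨆ k, u k := by
      refine lt_of_lt_of_le ?_ h
      exact_mod_cast Nat.lt_succ_self m
    obtain ⟨k, hk⟩ := lt_iSup_iff.mp h1
    refine ⟨k, ?_⟩
    have := (ENat.add_one_le_iff (n := u k) (m := (m : ℕ∞)) (by simp)).mpr hk
    exact_mod_cast this

/-- Each of the sets A_i of minimal beaters of a set M ⊆ ℕ^n is finite. -/
theorem stmt13 (n : ℕ) (M : Set (Fin n → ℕ)) (i : ℕ) : (MinBeaters n i M).Finite := by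
  by_contra hinf
  have hI : (MinBeaters n i M).Infinite := hinf
  let e := hI.natEmbedding
  let f : ℕ → (Fin n → ℕ∞) := fun k => (e k : Fin n → ℕ∞)
  have hfmem : ∀ k, f k ∈ MinBeaters n i M := fun k => (e k).2
  have hfinj : Function.Injective f := fun a b hab => e.injective (Subtype.ext hab)
  haveI : IsWellOrder ℕ∞ (· < ·) := ⟨⟩
  have hpwo : (Set.univ : Set (Fin n → ℕ∞)).IsPWO := Set.isPWO_univ_iff.mpr inferInstance
  obtain ⟨g, hg⟩ := hpwo.exists_monotone_subseq (f := f) (fun _ => Set.mem_univ _)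
  set x : ℕ → (Fin n → ℕ∞) := f ∘ g with hx
  have hxmono : Monotone x := hg
  have hxinj : Function.Injective x := hfinj.comp g.injective
  have hxmem : ∀ k, x k ∈ MinBeaters n i M := fun k => hfmem (g k)
  -- the coordinatewise supremum
  set z : Fin n → ℕ∞ := fun j => ⨆ k, x k j with hz
  have hxz : ∀ k, x k ≤ z := fun k j => le_iSup (fun k => x k j) k
  -- for each coordinate, either z j = ⊤ or the sup is attained from some point on
  have key : ∀ j : Fin n, ∃ K, z j = ⊤ ∨ x K j = z j := by
    intro j
    rcases eq_or_ne (z j) ⊤ with htop | htop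
    · exact ⟨0, Or.inl htop⟩
    · obtain ⟨m, hm⟩ := WithTop.ne_top_iff_exists.mp htop
      obtain ⟨K, hK⟩ := exists_le_of_natCast_le_iSup (fun k => x k j) m (by exact hm.le)
      exact ⟨K, Or.inr (le_antisymm (hxz K j) (le_trans hm.ge hK))⟩
  choose Kf hKf using key
  set K : ℕ := Finset.univ.sup Kf with hKdef
  have hKj : ∀ j, z j = x K j ∨ z j = ⊤ := by
    intro j
    rcases hKf j with htop | hattain
    · exact Or.inr htop
    · left
      have h1 : Kf j ≤ K := Finset.le_sup (Finset.mem_univ j)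
      have h2 : x (Kf j) j ≤ x K j := hxmono h1 j
      have h3 : z j ≤ x K j := hattain ▸ h2
      exact le_antisymm h3 (hxz K j)
  have hzne : z ≠ x K := by
    intro hEq
    have h1 : x (K + 1) ≤ x K := hEq ▸ hxz (K + 1)
    have h2 : x K ≤ x (K + 1) := hxmono (Nat.le_succ K)
    exact Nat.succ_ne_self K (hxinj (le_antisymm h1 h2))
  -- minimality of x K applied to z
  have hnb : ¬ Beats z M := (hxmem K).2.2 z hzne hKj
  rw [Beats] at hnb
  push_neg at hnb
  obtain ⟨w, hwM, hwz⟩ := hnb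
  -- find a single index m with w ≤ x m
  have hcoord : ∀ j : Fin n, ∃ m, (w j : ℕ∞) ≤ x m j := by
    intro j
    exact exists_le_of_natCast_le_iSup (fun k => x k j) (w j) (hwz j)
  choose mf hmf using hcoord
  set m : ℕ := Finset.univ.sup mf with hmdef
  have : (fun j => (w j : ℕ∞)) ≤ x m := by
    intro j
    exact le_trans (hmf j) (hxmono (Finset.le_sup (Finset.mem_univ j)) j)
  exact (hxmem m).2.1 w hwM this
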